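/- Let b < 0, K ≥ 0, and define a_k = b for 0 ≤ k < K and a_k = 2 log((k+1)/(k+2)) for k ≥ K; let s_n = ∑_{k=0}^{n-1} a_k. Then s_n = nb for n ≤ K and s_n = Kb + 2 log((K+1)/(n+1)) for n > K, and ∑_{n≥1} e^{s_n} < e^b (1 - e^{bK})/(1 - e^b) + e^{bK}(K+1). Moreover, ∑_n (n+1) e^{s_n} = ∞. -/

import Mathlib

/-- The Birkhoff sums `s_n = ∑_{k<n} a_k` of the Hofbauer–Keller potential:
`a_k = b` for `k < K` and `a_k = 2 log((k+1)/(k+2))` for `k ≥ K`. -/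
noncomputable def sHK (b : ℝ) (K : ℕ) (n : ℕ) : ℝ :=
  ∑ k ∈ Finset.range n,
    (if k < K then b else 2 * Real.log (((k : ℝ) + 1) / ((k : ℝ) + 2)))

section aux

variable (b : ℝ) (K : ℕ)

lemma sHK_le (n : ℕ) (hn : n ≤ K) : sHK b K n = n * b := by
  unfold sHK
  rw [Finset.sum_congr rfl
    (fun k hk => if_pos (lt_of_lt_of_le (Finset.mem_range.mp hk) hn))]
  simp [mul_comm]

lemma sHK_ge (n : ℕ) (hn : K ≤ n) :
    sHK b K n = K * b + 2 * (Real.log ((K : ℝ) + 1) - Real.log ((n : ℝ) + 1)) := by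
  induction n, hn using Nat.le_induction with
  | base => rw [sHK_le b K K le_rfl]; ring
  | succ n hn ih =>
    unfold sHK at ih ⊢
    rw [Finset.sum_range_succ, ih, if_neg (by omega)]
    have h1 : (0 : ℝ) < (n : ℝ) + 1 := by positivity
    have h2 : (0 : ℝ) < (n : ℝ) + 2 := by positivity
    rw [Real.log_div h1.ne' h2.ne']
    have : ((n : ℝ) + 1) + 1 = (n : ℝ) + 2 := by ring
    push_cast
    rw [this]
    ring

lemma exp_sHK_ge (n : ℕ) (hn : K ≤ n) :
    Real.exp (sHK b K n) = Real.exp (b * K) * (((K : ℝ) + 1) / ((n : ℝ) + 1)) ^ 2 := by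
  have h1 : (0 : ℝ) < (K : ℝ) + 1 := by positivity
  have h2 : (0 : ℝ) < (n : ℝ) + 1 := by positivity
  have hr : (0 : ℝ) < ((K : ℝ) + 1) / ((n : ℝ) + 1) := by positivity
  rw [sHK_ge b K n hn, ← Real.log_div h1.ne' h2.ne', two_mul, ← add_assoc,
    Real.exp_add, Real.exp_add, Real.exp_log hr, mul_comm (K : ℝ) b, sq, mul_assoc]

end aux

/-- For `b < 0` and `K ≥ 0`: `s_n = nb` for `n ≤ K`,
`s_n = Kb + 2 log((K+1)/(n+1))` for `n > K`,
`∑_{n ≥ 1} e^{s_n} < e^b (1-e^{bK})/(1-e^b) + e^{bK}(K+1)`, and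
`∑_n (n+1) e^{s_n} = ∞`. -/
theorem stmt9 (b : ℝ) (hb : b < 0) (K : ℕ) :
    (∀ n : ℕ, n ≤ K → sHK b K n = n * b) ∧
    (∀ n : ℕ, K < n →
      sHK b K n = K * b + 2 * Real.log (((K : ℝ) + 1) / ((n : ℝ) + 1))) ∧
    Summable (fun n : ℕ => Real.exp (sHK b K (n + 1))) ∧
    (∑' n : ℕ, Real.exp (sHK b K (n + 1)))
      < Real.exp b * (1 - Real.exp (b * K)) / (1 - Real.exp b)
        + Real.exp (b * K) * ((K : ℝ) + 1) ∧
    ¬ Summable (fun n : ℕ => ((n : ℝ) + 1) * Real.exp (sHK b K n)) := by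
  have hK1 : (0 : ℝ) < (K : ℝ) + 1 := by positivity
  set c : ℝ := Real.exp (b * K) * ((K : ℝ) + 1) ^ 2 with hc
  have hc0 : 0 < c := by positivity
  -- the shifted exponential values
  have hfK : ∀ n : ℕ, Real.exp (sHK b K (n + K + 1))
      = c * (1 / ((n : ℝ) + (K : ℝ) + 2) ^ 2) := by
    intro n
    rw [exp_sHK_ge b K (n + K + 1) (by omega), hc]
    have : ((n + K + 1 : ℕ) : ℝ) + 1 = (n : ℝ) + (K : ℝ) + 2 := by push_cast; ring
    rw [this, div_pow]
    ring
  -- p-series summability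
  have hp : Summable (fun n : ℕ => 1 / ((n : ℝ)) ^ 2) :=
    Real.summable_one_div_nat_pow.mpr (by norm_num)
  have hS2 : Summable (fun n : ℕ => 1 / ((n : ℝ) + (K : ℝ) + 2) ^ 2) := by
    refine ((summable_nat_add_iff (K + 2)).mpr hp).congr fun n => ?_
    push_cast
    ring_nf
  -- summability of the main series
  have hsf : Summable (fun n : ℕ => Real.exp (sHK b K (n + 1))) := by
    rw [← summable_nat_add_iff K]
    refine (hS2.mul_left c).congr fun n => ?_
    exact (hfK n).symm
  refine ⟨sHK_le b K, ?_, hsf, ?_, ?_⟩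
  · intro n hn
    have h1 : (0 : ℝ) < (K : ℝ) + 1 := by positivity
    have h2 : (0 : ℝ) < (n : ℝ) + 1 := by positivity
    rw [sHK_ge b K n (le_of_lt hn), Real.log_div h1.ne' h2.ne']
  · -- the tsum estimate
    have hE1 : Real.exp b ≠ 1 := by
      have := Real.exp_lt_one_iff.mpr hb
      exact ne_of_lt this
    -- split the sum
    have hsplit := (hsf.sum_add_tsum_nat_add K).symm
    rw [hsplit]
    -- first block: geometric sum
    have hfirst : (∑ i ∈ Finset.range K, Real.exp (sHK b K (i + 1)))
        = Real.exp b * (1 - Real.exp (b * K)) / (1 - Real.exp b) := by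
      have hterm : ∀ i ∈ Finset.range K,
          Real.exp (sHK b K (i + 1)) = Real.exp b * (Real.exp b) ^ i := by
        intro i hi
        have hiK : i + 1 ≤ K := Finset.mem_range.mp hi
        rw [sHK_le b K (i + 1) hiK, Real.exp_nat_mul, pow_succ, mul_comm]
      rw [Finset.sum_congr rfl hterm, ← Finset.mul_sum, geom_sum_eq hE1]
      rw [← Real.exp_nat_mul, mul_comm (K : ℝ) b]
      rw [show (Real.exp (b * K) - 1) / (Real.exp b - 1)
          = (1 - Real.exp (b * K)) / (1 - Real.exp b) by
        rw [← neg_sub 1 (Real.exp (b * K)), ← neg_sub 1 (Real.exp b), neg_div_neg_eq]]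
      rw [mul_div_assoc]
    rw [hfirst]
    refine (add_lt_add_iff_left _).mpr ?_
    -- tail estimate via telescoping
    set g : ℕ → ℝ := fun n => 1 / ((n : ℝ) + (K : ℝ) + 1) with hg
    set w : ℕ → ℝ := fun n => g n - g (n + 1) with hw
    have hwval : ∀ n : ℕ, w n
        = 1 / (((n : ℝ) + (K : ℝ) + 1) * ((n : ℝ) + (K : ℝ) + 2)) := by
      intro n
      have h1 : (0 : ℝ) < (n : ℝ) + (K : ℝ) + 1 := by positivity
      have h2 : (0 : ℝ) < (n : ℝ) + (K : ℝ) + 2 := by positivity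
      have h2' : (0 : ℝ) < (n : ℝ) + 1 + (K : ℝ) + 1 := by positivity
      simp only [hw, hg]
      push_cast
      rw [div_sub_div _ _ h1.ne' (by positivity : ((n:ℝ) + 1 + (K:ℝ) + 1) ≠ 0),
        div_eq_div_iff (by positivity) (by positivity)]
      ring
    have hwnonneg : ∀ n : ℕ, 0 ≤ w n := by
      intro n
      rw [hwval n]
      positivity
    -- HasSum for w
    have hg0 : Filter.Tendsto g Filter.atTop (nhds 0) := by
      have h1 : Filter.Tendsto (fun n : ℕ => (n : ℝ) + (K : ℝ) + 1)
          Filter.atTop Filter.atTop := by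
        apply Filter.tendsto_atTop_add_const_right
        apply Filter.tendsto_atTop_add_const_right
        exact tendsto_natCast_atTop_atTop
      refine h1.inv_tendsto_atTop.congr fun n => ?_
      rw [hg]
      exact (one_div _).symm
    have hwsum : HasSum w (1 / ((K : ℝ) + 1)) := by
      rw [hasSum_iff_tendsto_nat_of_nonneg hwnonneg]
      have hps : ∀ N : ℕ, ∑ i ∈ Finset.range N, w i = g 0 - g N := fun N =>
        Finset.sum_range_sub' g N
      simp only [hps]
      have : g 0 = 1 / ((K : ℝ) + 1) := by simp [hg]
      rw [← this]
      simpa using Filter.Tendsto.sub (tendsto_const_nhds (x := g 0)) hg0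
    have hv : HasSum (fun n => c * w n) (c * (1 / ((K : ℝ) + 1))) := hwsum.mul_left c
    -- strict comparison
    have hle : ∀ n : ℕ, Real.exp (sHK b K (n + K + 1)) ≤ c * w n := by
      intro n
      rw [hfK n, hwval n]
      have h1 : (0 : ℝ) < (n : ℝ) + (K : ℝ) + 1 := by positivity
      have h2 : (0 : ℝ) < (n : ℝ) + (K : ℝ) + 2 := by positivity
      refine mul_le_mul_of_nonneg_left ?_ hc0.le
      rw [sq]
      apply one_div_le_one_div_of_le (by positivity)
      nlinarith
    have hlt : Real.exp (sHK b K (0 + K + 1)) < c * w 0 := by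
      rw [hfK 0, hwval 0]
      have h1 : (0 : ℝ) < (0 : ℝ) + (K : ℝ) + 1 := by positivity
      have h2 : (0 : ℝ) < (0 : ℝ) + (K : ℝ) + 2 := by positivity
      refine mul_lt_mul_of_pos_left ?_ hc0
      rw [sq]
      apply one_div_lt_one_div_of_lt (by positivity)
      nlinarith
    have htail : (∑' n : ℕ, Real.exp (sHK b K (n + K + 1)))
        < ∑' n : ℕ, c * w n := by
      refine Summable.tsum_lt_tsum_of_nonneg (fun n => (Real.exp_pos _).le) hle hlt hv.summable
    calc (∑' n : ℕ, Real.exp (sHK b K (n + K + 1))) < ∑' n : ℕ, c * w n := htail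
      _ = c * (1 / ((K : ℝ) + 1)) := hv.tsum_eq
      _ = Real.exp (b * K) * ((K : ℝ) + 1) := by
          rw [hc]; field_simp
  · -- divergence
    intro hcon
    have h1 : Summable (fun n : ℕ => ((↑(n + K) : ℝ) + 1) * Real.exp (sHK b K (n + K))) :=
      (summable_nat_add_iff K).mpr hcon
    have h2 : Summable (fun n : ℕ => c * (1 / ((n : ℝ) + (K : ℝ) + 1))) := by
      refine h1.congr fun n => ?_
      rw [exp_sHK_ge b K (n + K) (by omega)]
      have hnk : ((n + K : ℕ) : ℝ) + 1 = (n : ℝ) + (K : ℝ) + 1 := by push_cast; ring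
      rw [hnk, div_pow, hc]
      have hpos : (0 : ℝ) < (n : ℝ) + (K : ℝ) + 1 := by positivity
      field_simp
    have h3 : Summable (fun n : ℕ => 1 / ((n : ℝ) + (K : ℝ) + 1)) := by
      refine (h2.mul_left c⁻¹).congr fun n => ?_
      rw [← mul_assoc, inv_mul_cancel₀ hc0.ne', one_mul]
    have h4 : Summable (fun n : ℕ => 1 / ((n : ℝ)) ) := by
      rw [← summable_nat_add_iff (K + 1)]
      refine h3.congr fun n => ?_
      push_cast
      ring_nf
    exact Real.not_summable_one_div_natCast h4
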